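/- Let X and Y be complex Banach spaces, A : X → Y and B, C : Y → X bounded linear operators satisfying A(BA)² = ABACA = ACABA = (AC)²A. Then AC − I is Fredholm if and only if BA − I is Fredholm. -/

import Mathlib

open ContinuousLinearMap Filter Topology Set

/-- `T` is Fredholm : finite-dimensional kernel and range of finite codimension. -/
def IsFredholmOp {E : Type*} [NormedAddCommGroup E] [NormedSpace ℂ E]
    (T : E →L[ℂ] E) : Prop :=
  FiniteDimensional ℂ (LinearMap.ker (T : E →ₗ[ℂ] E)) ∧ FiniteDimensional ℂ (E ⧸ LinearMap.range (T : E →ₗ[ℂ] E))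

theorem stmt_19 {X Y : Type*} [NormedAddCommGroup X] [NormedSpace ℂ X] [CompleteSpace X]
    [NormedAddCommGroup Y] [NormedSpace ℂ Y] [CompleteSpace Y]
    (A : X →L[ℂ] Y) (B C : Y →L[ℂ] X)
    (h1 : A ∘L B ∘L A ∘L B ∘L A = A ∘L B ∘L A ∘L C ∘L A)
    (h2 : A ∘L B ∘L A ∘L C ∘L A = A ∘L C ∘L A ∘L B ∘L A)
    (h3 : A ∘L C ∘L A ∘L B ∘L A = A ∘L C ∘L A ∘L C ∘L A) :
    IsFredholmOp (A ∘L C - 1) ↔ IsFredholmOp (B ∘L A - 1) := by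
  -- pointwise versions of the hypotheses
  have e1 : ∀ x : X, A (B (A (B (A x)))) = A (B (A (C (A x)))) := fun x => by
    simpa using DFunLike.congr_fun h1 x
  have e2 : ∀ x : X, A (B (A (C (A x)))) = A (C (A (B (A x)))) := fun x => by
    simpa using DFunLike.congr_fun h2 x
  have e3 : ∀ x : X, A (C (A (B (A x)))) = A (C (A (C (A x)))) := fun x => by
    simpa using DFunLike.congr_fun h3 x
  -- membership characterizations
  have memP : ∀ x : X, x ∈ LinearMap.ker ((B ∘L A - 1 : X →L[ℂ] X) : X →ₗ[ℂ] X) ↔ B (A x) = x := fun x => by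
    simp [LinearMap.mem_ker, sub_eq_zero]
  have memQ : ∀ y : Y, y ∈ LinearMap.ker ((A ∘L C - 1 : Y →L[ℂ] Y) : Y →ₗ[ℂ] Y) ↔ A (C y) = y := fun y => by
    simp [LinearMap.mem_ker, sub_eq_zero]
  -- key pointwise lemmas
  have kBA : ∀ x : X, B (A x) = x → A (C (A x)) = A x := by
    intro x hx
    calc A (C (A x)) = A (C (A (B (A x)))) := by rw [hx]
      _ = A (B (A (C (A x)))) := (e2 x).symm
      _ = A (B (A (B (A x)))) := (e1 x).symm
      _ = A x := by rw [hx, hx]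
  have kAC : ∀ y : Y, A (C y) = y → A (B y) = y := by
    intro y hy
    calc A (B y) = A (B (A (C (A (C y))))) := by rw [hy, hy]
      _ = A (C (A (C (A (C y))))) := (e2 (C y)).trans (e3 (C y))
      _ = y := by rw [hy, hy, hy]
  constructor
  · rintro ⟨hk, hr⟩
    constructor
    · -- ker(BA-1) embeds into ker(AC-1) via A
      let f : LinearMap.ker ((B ∘L A - 1 : X →L[ℂ] X) : X →ₗ[ℂ] X) →ₗ[ℂ] LinearMap.ker ((A ∘L C - 1 : Y →L[ℂ] Y) : Y →ₗ[ℂ] Y) :=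
        LinearMap.codRestrict _
          (A.toLinearMap.comp (LinearMap.ker ((B ∘L A - 1 : X →L[ℂ] X) : X →ₗ[ℂ] X)).subtype)
          (fun x => (memQ _).2 (kBA x ((memP x.1).1 x.2)))
      have hf : Function.Injective f := by
        intro u v huv
        have h0 : A u.1 = A v.1 := congrArg Subtype.val huv
        have hu : B (A u.1) = u.1 := (memP u.1).1 u.2
        have hv : B (A v.1) = v.1 := (memP v.1).1 v.2
        exact Subtype.ext (by rw [← hu, ← hv, h0])
      exact FiniteDimensional.of_injective f hf
    · -- X⧸ran(AC-1)  ↠  X⧸ran(BA-1) via W = BACAC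
      let W : Y →ₗ[ℂ] X :=
        B.toLinearMap ∘ₗ A.toLinearMap ∘ₗ C.toLinearMap ∘ₗ A.toLinearMap ∘ₗ C.toLinearMap
      let g : Y →ₗ[ℂ] X ⧸ LinearMap.range ((B ∘L A - 1 : X →L[ℂ] X) : X →ₗ[ℂ] X) :=
        (LinearMap.range ((B ∘L A - 1 : X →L[ℂ] X) : X →ₗ[ℂ] X)).mkQ ∘ₗ W
      have hle : LinearMap.range ((A ∘L C - 1 : Y →L[ℂ] Y) : Y →ₗ[ℂ] Y) ≤ LinearMap.ker g := by
        rintro _ ⟨y, rfl⟩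
        have key : B (A (B (A (C (A (C y)))))) = B (A (C (A (C (A (C y)))))) :=
          congrArg B ((e2 (C y)).trans (e3 (C y)))
        have : W ((A ∘L C - 1) y) = (B ∘L A - 1) (W y) := by
          simp only [W, LinearMap.comp_apply, ContinuousLinearMap.coe_coe,
            ContinuousLinearMap.sub_apply, ContinuousLinearMap.comp_apply,
            ContinuousLinearMap.one_apply, map_sub, key]
        simp only [LinearMap.mem_ker, g, LinearMap.comp_apply, ContinuousLinearMap.coe_coe, this]
        exact (Submodule.Quotient.mk_eq_zero _).2
          (LinearMap.mem_range_self ((B ∘L A - 1 : X →L[ℂ] X) : X →ₗ[ℂ] X) (W y))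
      have hsurj : Function.Surjective ((LinearMap.range ((A ∘L C - 1 : Y →L[ℂ] Y) : Y →ₗ[ℂ] Y)).liftQ g hle) := by
        intro z
        obtain ⟨x, rfl⟩ := (LinearMap.range ((B ∘L A - 1 : X →L[ℂ] X) : X →ₗ[ℂ] X)).mkQ_surjective z
        refine ⟨Submodule.Quotient.mk (A x), ?_⟩
        have key : B (A (B (A (B (A x))))) = B (A (C (A (C (A x))))) :=
          congrArg B ((e1 x).trans ((e2 x).trans (e3 x)))
        have hmem : W (A x) - x ∈ LinearMap.range ((B ∘L A - 1 : X →L[ℂ] X) : X →ₗ[ℂ] X) := by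
          refine ⟨x + B (A x) + B (A (B (A x))), ?_⟩
          simp only [ContinuousLinearMap.sub_apply, ContinuousLinearMap.comp_apply,
            ContinuousLinearMap.one_apply, map_add, W, LinearMap.comp_apply,
            ContinuousLinearMap.coe_coe, ← key]
          abel
        calc (LinearMap.range ((A ∘L C - 1 : Y →L[ℂ] Y) : Y →ₗ[ℂ] Y)).liftQ g hle (Submodule.Quotient.mk (A x))
            = Submodule.Quotient.mk (W (A x)) := rfl
          _ = (LinearMap.range ((B ∘L A - 1 : X →L[ℂ] X) : X →ₗ[ℂ] X)).mkQ x := (Submodule.Quotient.eq _).2 hmem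
      exact Module.Finite.of_surjective _ hsurj
  · rintro ⟨hk, hr⟩
    constructor
    · -- ker(AC-1) embeds into ker(BA-1) via B
      let f : LinearMap.ker ((A ∘L C - 1 : Y →L[ℂ] Y) : Y →ₗ[ℂ] Y) →ₗ[ℂ] LinearMap.ker ((B ∘L A - 1 : X →L[ℂ] X) : X →ₗ[ℂ] X) :=
        LinearMap.codRestrict _
          (B.toLinearMap.comp (LinearMap.ker ((A ∘L C - 1 : Y →L[ℂ] Y) : Y →ₗ[ℂ] Y)).subtype)
          (fun y => by
            have hy : A (C y.1) = y.1 := (memQ y.1).1 y.2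
            have hab : A (B y.1) = y.1 := kAC y.1 hy
            exact (memP _).2 (by
              show B (A (B y.1)) = B y.1
              rw [hab]))
      have hf : Function.Injective f := by
        intro u v huv
        have h0 : B u.1 = B v.1 := congrArg Subtype.val huv
        have hu : A (B u.1) = u.1 := kAC u.1 ((memQ u.1).1 u.2)
        have hv : A (B v.1) = v.1 := kAC v.1 ((memQ v.1).1 v.2)
        exact Subtype.ext (by rw [← hu, ← hv, h0])
      exact FiniteDimensional.of_injective f hf
    · -- X⧸ran(BA-1)  ↠  Y⧸ran(AC-1) via A
      let g : X →ₗ[ℂ] Y ⧸ LinearMap.range ((A ∘L C - 1 : Y →L[ℂ] Y) : Y →ₗ[ℂ] Y) :=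
        (LinearMap.range ((A ∘L C - 1 : Y →L[ℂ] Y) : Y →ₗ[ℂ] Y)).mkQ ∘ₗ A.toLinearMap
      have hle : LinearMap.range ((B ∘L A - 1 : X →L[ℂ] X) : X →ₗ[ℂ] X) ≤ LinearMap.ker g := by
        rintro _ ⟨x, rfl⟩
        have hid : (A ∘L C - 1) (A x - A (B (A x)) + A (C (A x)))
            = A ((B ∘L A - 1) x) := by
          simp only [ContinuousLinearMap.sub_apply, ContinuousLinearMap.comp_apply,
            ContinuousLinearMap.one_apply, map_add, map_sub, e3]
          abel
        simp only [LinearMap.mem_ker, g, LinearMap.comp_apply,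
          ContinuousLinearMap.coe_coe, ← hid]
        exact (Submodule.Quotient.mk_eq_zero _).2 (LinearMap.mem_range_self _ _)
      have hsurj : Function.Surjective ((LinearMap.range ((B ∘L A - 1 : X →L[ℂ] X) : X →ₗ[ℂ] X)).liftQ g hle) := by
        intro z
        obtain ⟨y, rfl⟩ := (LinearMap.range ((A ∘L C - 1 : Y →L[ℂ] Y) : Y →ₗ[ℂ] Y)).mkQ_surjective z
        refine ⟨Submodule.Quotient.mk (C y), ?_⟩
        have hmem : A (C y) - y ∈ LinearMap.range ((A ∘L C - 1 : Y →L[ℂ] Y) : Y →ₗ[ℂ] Y) :=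
          ⟨y, by simp⟩
        calc (LinearMap.range ((B ∘L A - 1 : X →L[ℂ] X) : X →ₗ[ℂ] X)).liftQ g hle (Submodule.Quotient.mk (C y))
            = Submodule.Quotient.mk (A (C y)) := rfl
          _ = (LinearMap.range ((A ∘L C - 1 : Y →L[ℂ] Y) : Y →ₗ[ℂ] Y)).mkQ y := (Submodule.Quotient.eq _).2 hmem
      exact Module.Finite.of_surjective _ hsurj
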